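/- Let φ̂₁ : X̂ → ℝ be bounded and measurable, let φ̂_n := Σ_{j=0}^{n-1} κ̂ʲφ̂₁ be its κ̂-additive process, and set φ̄_n(x) := inf_{z ∈ π⁻¹(x)} φ̂_n(z). Assume each φ̄_n is measurable. Then the sequence (φ̄_n) is κ-superadditive: for all n, m ≥ 1 and every x ∈ X, φ̄_{n+m}(x) ≥ φ̄_n(x) + ∫ φ̄_m d(κⁿ x), where κⁿ is the n-fold composition of the kernel κ. -/

import Mathlib

open MeasureTheory ProbabilityTheory

noncomputable section

/-- The integral operator associated with a Markov kernel. -/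
def kernelOp {Z : Type*} [MeasurableSpace Z] (q : Kernel Z Z) (u : Z → ℝ) : Z → ℝ :=
  fun z => ∫ w, u w ∂(q z)

/-- `j`-fold application of the integral operator of a kernel. -/
def kernelOpIter {Z : Type*} [MeasurableSpace Z] (q : Kernel Z Z) : ℕ → (Z → ℝ) → (Z → ℝ)
  | 0 => fun u => u
  | n + 1 => fun u => kernelOp q (kernelOpIter q n u)

/-- The `n`-fold composition of a kernel, as a measure-valued map. -/
def kernelIterMeasure {Z : Type*} [MeasurableSpace Z] (q : Kernel Z Z) : ℕ → Z → Measure Z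
  | 0 => fun z => Measure.dirac z
  | n + 1 => fun z => (kernelIterMeasure q n z).bind (fun w => q w)

section Aux

variable {Z : Type*} [MeasurableSpace Z]

lemma integrable_of_bdd {μ : Measure Z} [IsFiniteMeasure μ] {u : Z → ℝ} {C : ℝ}
    (hu : Measurable u) (hb : ∀ z, |u z| ≤ C) : Integrable u μ :=
  ⟨hu.aestronglyMeasurable, HasFiniteIntegral.of_bounded (C := C)
    (Filter.Eventually.of_forall fun z => by simpa [Real.norm_eq_abs] using hb z)⟩

variable (q : Kernel Z Z) [IsMarkovKernel q]

lemma kernelOp_measurable {u : Z → ℝ} (hu : Measurable u) : Measurable (kernelOp q u) := by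
  have h : StronglyMeasurable (Function.uncurry fun (_ : Z) (w : Z) => u w) :=
    (hu.comp measurable_snd).stronglyMeasurable
  exact (h.integral_kernel_prod_right (κ := q)).measurable

lemma kernelOp_bdd {u : Z → ℝ} {C : ℝ} (hb : ∀ z, |u z| ≤ C) (z : Z) :
    |kernelOp q u z| ≤ C := by
  have h := norm_integral_le_of_norm_le_const (μ := q z) (f := u) (C := C)
    (Filter.Eventually.of_forall fun w => by simpa [Real.norm_eq_abs] using hb w)
  simpa [Real.norm_eq_abs, measure_univ, kernelOp] using h

lemma iterProb (n : ℕ) (z : Z) : IsProbabilityMeasure (kernelIterMeasure q n z) := by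
  induction n generalizing z with
  | zero =>
    simp only [kernelIterMeasure]
    infer_instance
  | succ n ih =>
    constructor
    haveI := ih z
    show ((kernelIterMeasure q n z).bind fun w => q w) Set.univ = 1
    rw [Measure.bind_apply MeasurableSet.univ q.measurable.aemeasurable]
    simp [measure_univ]

lemma integral_bind_eq {μ : Measure Z} [IsProbabilityMeasure μ] {u : Z → ℝ} {C : ℝ}
    (hu : Measurable u) (hb : ∀ z, |u z| ≤ C) :
    ∫ w, u w ∂(μ.bind fun z => q z) = ∫ z, kernelOp q u z ∂μ := by
  haveI hν : IsProbabilityMeasure (μ.bind fun z => q z) := by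
    constructor
    rw [Measure.bind_apply MeasurableSet.univ q.measurable.aemeasurable]
    simp [measure_univ]
  set g : Z → ℝ := fun w => u w + C with hg
  have hgmeas : Measurable g := hu.add_const C
  have hgnn : ∀ w, 0 ≤ g w := fun w => by
    have := (abs_le.mp (hb w)).1
    simp only [hg]
    linarith
  have hgbdd : ∀ w, |g w| ≤ C + C := fun w => by
    have h1 := (abs_le.mp (hb w)).1
    have h2 := (abs_le.mp (hb w)).2
    rw [abs_le]
    constructor <;> simp only [hg] <;> linarith
  have key : ∫ w, g w ∂(μ.bind fun z => q z) = ∫ z, kernelOp q g z ∂μ := by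
    have h1 : ∫ w, g w ∂(μ.bind fun z => q z)
        = (∫⁻ w, ENNReal.ofReal (g w) ∂(μ.bind fun z => q z)).toReal :=
      integral_eq_lintegral_of_nonneg_ae (Filter.Eventually.of_forall hgnn)
        hgmeas.aestronglyMeasurable
    have h2 : ∫ z, kernelOp q g z ∂μ
        = (∫⁻ z, ENNReal.ofReal (kernelOp q g z) ∂μ).toReal :=
      integral_eq_lintegral_of_nonneg_ae
        (Filter.Eventually.of_forall fun z => integral_nonneg hgnn)
        (kernelOp_measurable q hgmeas).aestronglyMeasurable
    rw [h1, h2, Measure.lintegral_bind q.measurable.aemeasurable hgmeas.ennreal_ofReal.aemeasurable]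
    congr 1
    refine lintegral_congr fun z => ?_
    exact (ofReal_integral_eq_lintegral_ofReal (integrable_of_bdd hgmeas hgbdd)
      (Filter.Eventually.of_forall hgnn)).symm
  have hiu : Integrable u (μ.bind fun z => q z) := integrable_of_bdd hu hb
  have hik : Integrable (kernelOp q u) μ :=
    integrable_of_bdd (kernelOp_measurable q hu) (kernelOp_bdd q hb)
  have hkg : ∀ z, kernelOp q g z = kernelOp q u z + C := fun z => by
    have hi : Integrable u (q z) := integrable_of_bdd hu hb
    simp [kernelOp, hg, integral_add hi (integrable_const C), measure_univ]
  have e1 : ∫ w, g w ∂(μ.bind fun z => q z) = (∫ w, u w ∂(μ.bind fun z => q z)) + C := by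
    simp [hg, integral_add hiu (integrable_const C), measure_univ]
  have e2 : ∫ z, kernelOp q g z ∂μ = (∫ z, kernelOp q u z ∂μ) + C := by
    simp_rw [hkg]
    simp [integral_add hik (integrable_const C), measure_univ]
  rw [e1, e2] at key
  linarith

lemma kernelOp_iter_comm (n : ℕ) (u : Z → ℝ) :
    kernelOp q (kernelOpIter q n u) = kernelOpIter q n (kernelOp q u) := by
  induction n generalizing u with
  | zero => rfl
  | succ n ih =>
    show kernelOp q (kernelOp q (kernelOpIter q n u))
        = kernelOp q (kernelOpIter q n (kernelOp q u))
    rw [ih]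

lemma kernelOpIter_measurable (n : ℕ) {u : Z → ℝ} (hu : Measurable u) :
    Measurable (kernelOpIter q n u) := by
  induction n with
  | zero => exact hu
  | succ n ih => exact kernelOp_measurable q ih

lemma kernelOpIter_bdd (n : ℕ) {u : Z → ℝ} {C : ℝ} (hb : ∀ z, |u z| ≤ C) :
    ∀ z, |kernelOpIter q n u z| ≤ C := by
  induction n with
  | zero => exact hb
  | succ n ih => exact kernelOp_bdd q ih

lemma kernelOpIter_eq_integral (n : ℕ) {u : Z → ℝ} {C : ℝ}
    (hu : Measurable u) (hb : ∀ z, |u z| ≤ C) (z : Z) :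
    kernelOpIter q n u z = ∫ w, u w ∂(kernelIterMeasure q n z) := by
  induction n generalizing u C with
  | zero => exact (integral_dirac' u z hu.stronglyMeasurable).symm
  | succ n ih =>
    haveI := iterProb q n z
    have h1 : ∫ w, u w ∂(kernelIterMeasure q (n + 1) z)
        = ∫ w, kernelOp q u w ∂(kernelIterMeasure q n z) :=
      integral_bind_eq q hu hb
    rw [h1, ← ih (kernelOp_measurable q hu) (kernelOp_bdd q hb)]
    exact congrFun (kernelOp_iter_comm q n u) z

lemma kernelOp_sum {ι : Type*} (s : Finset ι) (f : ι → Z → ℝ)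
    (hmeas : ∀ i ∈ s, Measurable (f i)) (hbdd : ∀ i ∈ s, ∃ C, ∀ z, |f i z| ≤ C) :
    kernelOp q (fun z => ∑ i ∈ s, f i z) = fun z => ∑ i ∈ s, kernelOp q (f i) z := by
  funext z
  exact integral_finset_sum s fun i hi => by
    obtain ⟨C, hC⟩ := hbdd i hi
    exact integrable_of_bdd (hmeas i hi) hC

lemma kernelOpIter_sum {ι : Type*} (n : ℕ) (s : Finset ι) (f : ι → Z → ℝ)
    (hmeas : ∀ i ∈ s, Measurable (f i)) (hbdd : ∀ i ∈ s, ∃ C, ∀ z, |f i z| ≤ C) :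
    kernelOpIter q n (fun z => ∑ i ∈ s, f i z)
      = fun z => ∑ i ∈ s, kernelOpIter q n (f i) z := by
  induction n with
  | zero => rfl
  | succ n ih =>
    show kernelOp q (kernelOpIter q n (fun z => ∑ i ∈ s, f i z)) = _
    rw [ih, kernelOp_sum q s _ (fun i hi => kernelOpIter_measurable q n (hmeas i hi))
      (fun i hi => by
        obtain ⟨C, hC⟩ := hbdd i hi
        exact ⟨C, kernelOpIter_bdd q n hC⟩)]
    rfl

lemma kernelOpIter_add (a b : ℕ) (u : Z → ℝ) :
    kernelOpIter q (a + b) u = kernelOpIter q a (kernelOpIter q b u) := by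
  induction b generalizing u with
  | zero => rfl
  | succ b ih =>
    show kernelOp q (kernelOpIter q (a + b) u)
        = kernelOpIter q a (kernelOp q (kernelOpIter q b u))
    rw [ih, kernelOp_iter_comm]

end Aux

lemma map_bind' {α β γ : Type*} [MeasurableSpace α] [MeasurableSpace β] [MeasurableSpace γ]
    (μ : Measure α) (f : α → Measure β) (g : β → γ) (hf : Measurable f) (hg : Measurable g) :
    (μ.bind f).map g = μ.bind fun a => (f a).map g := by
  ext s hs
  rw [Measure.map_apply hg hs, Measure.bind_apply (hg hs) hf.aemeasurable,
    Measure.bind_apply hs (show Measurable fun a => (f a).map g from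
      (Measure.measurable_map g hg).comp hf).aemeasurable]
  exact lintegral_congr fun a => (Measure.map_apply hg hs).symm

lemma bind_map' {α β γ : Type*} [MeasurableSpace α] [MeasurableSpace β] [MeasurableSpace γ]
    (μ : Measure α) (g : α → β) (f : β → Measure γ) (hg : Measurable g) (hf : Measurable f) :
    (μ.map g).bind f = μ.bind fun a => f (g a) := by
  ext s hs
  rw [Measure.bind_apply hs hf.aemeasurable,
    lintegral_map (show Measurable fun b => f b s from (Measure.measurable_coe hs).comp hf) hg,
    Measure.bind_apply hs (show Measurable fun a => f (g a) from hf.comp hg).aemeasurable]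

lemma map_iterMeasure {Xh X : Type*} [MeasurableSpace Xh] [MeasurableSpace X]
    (π : Xh → X) (hπ : Measurable π)
    (κh : Kernel Xh Xh) (κ : Kernel X X)
    (h : ∀ z, (κh z).map π = κ (π z)) (n : ℕ) (z : Xh) :
    (kernelIterMeasure κh n z).map π = kernelIterMeasure κ n (π z) := by
  induction n generalizing z with
  | zero => exact Measure.map_dirac' hπ z
  | succ n ih =>
    show ((kernelIterMeasure κh n z).bind fun w => κh w).map π = _
    rw [map_bind' _ _ π κh.measurable hπ]
    simp_rw [h]
    rw [← bind_map' _ π (fun y => κ y) hπ κ.measurable, ih z]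
    rfl

/-- The fiberwise minimization of a `κ̂`-additive process is
`κ`-superadditive (dual version of the fiberwise-maximum subadditivity theorem). -/
theorem fiberwise_inf_is_superadditive
    {Xh X : Type*} [MeasurableSpace Xh] [MeasurableSpace X]
    (π : Xh → X) (hπ_meas : Measurable π) (hπ_surj : Function.Surjective π)
    (κh : Kernel Xh Xh) [IsMarkovKernel κh]
    (κ : Kernel X X) [IsMarkovKernel κ]
    (h_intertwine : ∀ z : Xh, (κh z).map π = κ (π z))
    (φ1 : Xh → ℝ) (hφ1_meas : Measurable φ1)
    (C : ℝ) (hφ1_bdd : ∀ z, |φ1 z| ≤ C)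
    (φh : ℕ → Xh → ℝ)
    (hφh : ∀ n z, φh n z = ∑ j ∈ Finset.range n, kernelOpIter κh j φ1 z)
    (φbar : ℕ → X → ℝ)
    (hφbar : ∀ n x, φbar n x = sInf (φh n '' (π ⁻¹' {x})))
    (hφbar_meas : ∀ n, Measurable (φbar n)) :
    ∀ n m : ℕ, 1 ≤ n → 1 ≤ m → ∀ x : X,
      φbar (n + m) x ≥ φbar n x + ∫ y, φbar m y ∂(kernelIterMeasure κ n x) := by
  intro n m _ _ x
  have hφh_fun : ∀ k, φh k = fun z => ∑ j ∈ Finset.range k, kernelOpIter κh j φ1 z :=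
    fun k => funext (hφh k)
  have hφh_meas : ∀ k, Measurable (φh k) := fun k => by
    rw [hφh_fun]
    exact Finset.measurable_sum _ fun j _ => kernelOpIter_measurable κh j hφ1_meas
  have hφh_bdd : ∀ k z, |φh k z| ≤ k * C := fun k z => by
    rw [hφh]
    calc |∑ j ∈ Finset.range k, kernelOpIter κh j φ1 z|
        ≤ ∑ j ∈ Finset.range k, |kernelOpIter κh j φ1 z| := Finset.abs_sum_le_sum_abs _ _
      _ ≤ ∑ _j ∈ Finset.range k, C :=
          Finset.sum_le_sum fun j _ => kernelOpIter_bdd κh j hφ1_bdd z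
      _ = k * C := by simp [Finset.sum_const, nsmul_eq_mul]
  have hbdd_below : ∀ k y, BddBelow (φh k '' (π ⁻¹' {y})) := fun k y =>
    ⟨-(k * C), fun r ⟨z, _, hz⟩ => hz ▸ (abs_le.mp (hφh_bdd k z)).1⟩
  have hbar_le : ∀ k z, φbar k (π z) ≤ φh k z := fun k z => by
    rw [hφbar]
    exact csInf_le (hbdd_below k (π z)) ⟨z, rfl, rfl⟩
  have hbar_bdd : ∀ k y, |φbar k y| ≤ k * C := fun k y => by
    obtain ⟨z, hz⟩ := hπ_surj y
    rw [abs_le]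
    constructor
    · rw [hφbar]
      refine le_csInf ⟨φh k z, z, by simp [hz], rfl⟩ ?_
      rintro r ⟨w, _, hw⟩
      exact hw ▸ (abs_le.mp (hφh_bdd k w)).1
    · calc φbar k y = φbar k (π z) := by rw [hz]
        _ ≤ φh k z := hbar_le k z
        _ ≤ k * C := (abs_le.mp (hφh_bdd k z)).2
  -- decomposition φh (n+m) = φh n + κh^n (φh m)
  have hdecomp : ∀ z, φh (n + m) z = φh n z + kernelOpIter κh n (φh m) z := fun z => by
    have hsum : kernelOpIter κh n (φh m)
        = fun z => ∑ j ∈ Finset.range m, kernelOpIter κh n (kernelOpIter κh j φ1) z := by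
      rw [hφh_fun m]
      exact kernelOpIter_sum κh n (Finset.range m) _
        (fun j _ => kernelOpIter_measurable κh j hφ1_meas)
        (fun j _ => ⟨C, kernelOpIter_bdd κh j hφ1_bdd⟩)
    rw [hφh (n + m) z, hφh n z, hsum, Finset.sum_range_add]
    congr 1
    exact Finset.sum_congr rfl fun j _ =>
      congrFun (kernelOpIter_add κh n j φ1) z
  -- the key pointwise bound on the fiber over x
  haveI hPh : ∀ z : Xh, IsProbabilityMeasure (kernelIterMeasure κh n z) :=
    fun z => iterProb κh n z
  haveI hPx : IsProbabilityMeasure (kernelIterMeasure κ n x) := iterProb κ n x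
  have hpoint : ∀ z, π z = x →
      φbar n x + ∫ y, φbar m y ∂(kernelIterMeasure κ n x) ≤ φh (n + m) z := by
    intro z hz
    have hrep : kernelOpIter κh n (φh m) z
        = ∫ w, φh m w ∂(kernelIterMeasure κh n z) :=
      kernelOpIter_eq_integral κh n (hφh_meas m) (hφh_bdd m) z
    have hmono : ∫ w, φbar m (π w) ∂(kernelIterMeasure κh n z)
        ≤ ∫ w, φh m w ∂(kernelIterMeasure κh n z) := by
      refine integral_mono ?_ ?_ ?_
      · exact integrable_of_bdd ((hφbar_meas m).comp hπ_meas) (fun w => hbar_bdd m (π w))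
      · exact integrable_of_bdd (hφh_meas m) (hφh_bdd m)
      · exact fun w => hbar_le m w
    have hchg : ∫ w, φbar m (π w) ∂(kernelIterMeasure κh n z)
        = ∫ y, φbar m y ∂(kernelIterMeasure κ n x) := by
      rw [← hz, ← map_iterMeasure π hπ_meas κh κ h_intertwine n z]
      exact (integral_map hπ_meas.aemeasurable
        (hφbar_meas m).aestronglyMeasurable).symm
    rw [hdecomp z, hrep]
    have h1 : φbar n x ≤ φh n z := hz ▸ hbar_le n z
    have h2 : ∫ y, φbar m y ∂(kernelIterMeasure κ n x)
        ≤ ∫ w, φh m w ∂(kernelIterMeasure κh n z) := hchg ▸ hmono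
    linarith
  rw [ge_iff_le, hφbar (n + m) x]
  obtain ⟨z0, hz0⟩ := hπ_surj x
  refine le_csInf ⟨φh (n + m) z0, z0, hz0, rfl⟩ ?_
  rintro r ⟨z, hzmem, hz⟩
  exact hz ▸ hpoint z hzmem
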